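/- Let Ω be a nonempty finite set, A, B subsets of Ω with A ∪ B nonempty. The number of permutations σ of Ω such that the σ-minimal element of A ∪ B lies in A ∩ B equals |A ∩ B| · |Ω|! / |A ∪ B| (in particular, |A ∪ B| divides |A ∩ B| · |Ω|!), obtained by summing over each x ∈ A ∩ B the count |Ω|!/|A ∪ B| of permutations making x the σ-minimal element of A ∪ B. -/
import Mathlib


/-- The `σ`-minimal element of a nonempty finite set `A` of communities,
i.e. the `x ∈ A` minimizing the rank `σ x`. -/
def minUnder {Ω : Type*} [LinearOrder Ω] (σ : Equiv.Perm Ω) (A : Finset Ω)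
    (h : A.Nonempty) : Ω :=
  σ.symm ((A.image σ).min' (h.image σ))

section Aux

variable {Ω : Type*} [LinearOrder Ω]

lemma minUnder_mem (σ : Equiv.Perm Ω) (A : Finset Ω) (h : A.Nonempty) :
    minUnder σ A h ∈ A := by
  have hm := (A.image σ).min'_mem (h.image σ)
  rw [Finset.mem_image] at hm
  obtain ⟨a, ha, hae⟩ := hm
  rw [minUnder, ← hae, Equiv.symm_apply_apply]
  exact ha

lemma minUnder_le (σ : Equiv.Perm Ω) (A : Finset Ω) (h : A.Nonempty) {y : Ω} (hy : y ∈ A) :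
    σ (minUnder σ A h) ≤ σ y := by
  rw [minUnder, Equiv.apply_symm_apply]
  exact Finset.min'_le _ _ (Finset.mem_image_of_mem σ hy)

lemma minUnder_eq_iff (σ : Equiv.Perm Ω) (A : Finset Ω) (h : A.Nonempty) (x : Ω) :
    minUnder σ A h = x ↔ x ∈ A ∧ ∀ y ∈ A, σ x ≤ σ y := by
  constructor
  · rintro rfl
    exact ⟨minUnder_mem σ A h, fun y hy => minUnder_le σ A h hy⟩
  · rintro ⟨hx, hmin⟩
    have h1 : σ (minUnder σ A h) ≤ σ x := minUnder_le σ A h hx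
    have h2 : σ x ≤ σ (minUnder σ A h) := hmin _ (minUnder_mem σ A h)
    exact σ.injective (le_antisymm h1 h2)

lemma swap_mem {A : Finset Ω} {x y z : Ω} (hx : x ∈ A) (hy : y ∈ A) (hz : z ∈ A) :
    Equiv.swap x y z ∈ A := by
  rcases eq_or_ne z x with rfl | hzx
  · rwa [Equiv.swap_apply_left]
  rcases eq_or_ne z y with rfl | hzy
  · rwa [Equiv.swap_apply_right]
  · rwa [Equiv.swap_apply_of_ne_of_ne hzx hzy]

lemma minUnder_swap (σ : Equiv.Perm Ω) (A : Finset Ω) (h : A.Nonempty) {x y : Ω}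
    (hx : x ∈ A) (hy : y ∈ A) :
    minUnder (σ * Equiv.swap x y) A h = Equiv.swap x y (minUnder σ A h) := by
  rw [minUnder_eq_iff]
  refine ⟨swap_mem hx hy (minUnder_mem σ A h), fun z hz => ?_⟩
  simp only [Equiv.Perm.mul_apply, Equiv.swap_apply_self]
  exact minUnder_le σ A h (swap_mem hx hy hz)

variable [Fintype Ω]

lemma fiber_card_eq (A : Finset Ω) (h : A.Nonempty) {x y : Ω} (hx : x ∈ A) (hy : y ∈ A) :
    (Finset.univ.filter fun σ : Equiv.Perm Ω => minUnder σ A h = x).card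
      = (Finset.univ.filter fun σ : Equiv.Perm Ω => minUnder σ A h = y).card := by
  apply Finset.card_bij (fun σ _ => σ * Equiv.swap x y)
  · intro σ hσ
    rw [Finset.mem_filter] at hσ ⊢
    refine ⟨Finset.mem_univ _, ?_⟩
    rw [minUnder_swap σ A h hx hy, hσ.2, Equiv.swap_apply_left]
  · intro σ₁ _ σ₂ _ he
    exact mul_right_cancel he
  · intro τ hτ
    rw [Finset.mem_filter] at hτ
    refine ⟨τ * Equiv.swap x y, ?_, ?_⟩
    · rw [Finset.mem_filter]
      refine ⟨Finset.mem_univ _, ?_⟩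
      rw [minUnder_swap τ A h hx hy, hτ.2, Equiv.swap_apply_right]
    · rw [mul_assoc, Equiv.swap_mul_self, mul_one]

end Aux

/-- Let `Ω` be a nonempty finite set and `A, B` subsets of `Ω` with
`A ∪ B` nonempty. The number of permutations `σ` of `Ω` such that the `σ`-minimal element
of `A ∪ B` lies in `A ∩ B` equals `|A ∩ B| ⬝ |Ω|! / |A ∪ B|` (in particular, `|A ∪ B|`
divides `|A ∩ B| ⬝ |Ω|!`), obtained by summing, over each `x ∈ A ∩ B`, the count
`|Ω|! / |A ∪ B|` of permutations making `x` the `σ`-minimal element of `A ∪ B`. -/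
theorem count_perms_min_of_union_in_inter {Ω : Type*} [Fintype Ω] [LinearOrder Ω]
    [Nonempty Ω] (A B : Finset Ω) (h : (A ∪ B).Nonempty) :
    ((A ∪ B).card ∣ (A ∩ B).card * (Fintype.card Ω).factorial) ∧
    ((Finset.univ.filter (fun σ : Equiv.Perm Ω => minUnder σ (A ∪ B) h ∈ A ∩ B)).card
      = (A ∩ B).card * (Fintype.card Ω).factorial / (A ∪ B).card) ∧
    ((Finset.univ.filter (fun σ : Equiv.Perm Ω => minUnder σ (A ∪ B) h ∈ A ∩ B)).card
      = ∑ _x ∈ A ∩ B, (Fintype.card Ω).factorial / (A ∪ B).card) := by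
  set S := A ∪ B with hS
  obtain ⟨x₀, hx₀⟩ := h
  set m := (Finset.univ.filter fun σ : Equiv.Perm Ω => minUnder σ S h = x₀).card with hm
  have hfiber : ∀ x ∈ S,
      (Finset.univ.filter fun σ : Equiv.Perm Ω => minUnder σ S h = x).card = m :=
    fun x hx => (fiber_card_eq S h hx hx₀)
  have htotal : (Fintype.card Ω).factorial = S.card * m := by
    have h1 : (Finset.univ : Finset (Equiv.Perm Ω)).card
        = ∑ x ∈ S, (Finset.univ.filter fun σ : Equiv.Perm Ω => minUnder σ S h = x).card :=
      Finset.card_eq_sum_card_fiberwise (fun σ _ => minUnder_mem σ S h)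
    rw [Finset.card_univ, Fintype.card_perm] at h1
    rw [h1, Finset.sum_congr rfl hfiber, Finset.sum_const, smul_eq_mul]
  have hdvd : S.card ∣ (Fintype.card Ω).factorial := ⟨m, htotal⟩
  have hmval : m = (Fintype.card Ω).factorial / S.card := by
    rw [htotal, Nat.mul_div_cancel_left _ (Finset.card_pos.mpr h)]
  have hcount : (Finset.univ.filter (fun σ : Equiv.Perm Ω => minUnder σ S h ∈ A ∩ B)).card
      = (A ∩ B).card * m := by
    have h1 : (Finset.univ.filter (fun σ : Equiv.Perm Ω => minUnder σ S h ∈ A ∩ B)).card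
        = ∑ x ∈ A ∩ B, ((Finset.univ.filter (fun σ : Equiv.Perm Ω => minUnder σ S h ∈ A ∩ B)).filter
            fun σ => minUnder σ S h = x).card :=
      Finset.card_eq_sum_card_fiberwise (fun σ hσ => (Finset.mem_filter.mp hσ).2)
    rw [h1]
    have h2 : ∀ x ∈ A ∩ B,
        ((Finset.univ.filter (fun σ : Equiv.Perm Ω => minUnder σ S h ∈ A ∩ B)).filter
            fun σ => minUnder σ S h = x).card = m := by
      intro x hx
      rw [Finset.filter_filter]
      have heq : Finset.filter
            (fun σ : Equiv.Perm Ω => minUnder σ S h ∈ A ∩ B ∧ minUnder σ S h = x) Finset.univ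
          = Finset.filter (fun σ : Equiv.Perm Ω => minUnder σ S h = x) Finset.univ := by
        ext σ
        simp only [Finset.mem_filter, Finset.mem_univ, true_and]
        exact ⟨fun h' => h'.2, fun h' => ⟨h' ▸ hx, h'⟩⟩
      rw [heq]
      exact hfiber x (Finset.mem_of_subset (by rw [hS]; exact Finset.inter_subset_union) hx)
    rw [Finset.sum_congr rfl h2, Finset.sum_const, smul_eq_mul]
  refine ⟨Dvd.dvd.mul_left hdvd _, ?_, ?_⟩
  · rw [hcount, hmval, Nat.mul_div_assoc _ hdvd]
  · rw [hcount, hmval, Finset.sum_const, smul_eq_mul]
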